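/- Let λ ∈ ℚ, b = den λ, and r ≥ 1 an integer. For n ∈ ℕ, let Δ_n(X) = ⟨X⟩_n/n! ∈ ℚ[X] and let Δ_n^{(j)} denote the j-th derivative of this polynomial. Then for every k ≥ 1, the integer b^k · d_k^{r−1} · ∏_{p prime, p ∣ b} p^{τ_p(k)} is a common denominator of all the rational numbers Δ_n^{(j)}(λ)/j! for 0 ≤ j ≤ r−1 and 0 ≤ n ≤ k; that is, b^k · d_k^{r−1} · ∏_{p ∣ b} p^{τ_p(k)} · Δ_n^{(j)}(λ)/j! ∈ ℤ for all such j, n. -/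

import Mathlib

open Polynomial Finset

/-- `τ_p(k)`, the exponent of the prime `p` in `k!`. -/
def tau (p k : ℕ) : ℕ := (Nat.factorial k).factorization p

lemma descPoch_prod (n : ℕ) : descPochhammer ℚ n = ∏ i ∈ Finset.range n, (X - C (i:ℚ)) := by
  induction n with
  | zero => simp
  | succ n ih =>
    rw [descPochhammer_succ_right, ih, Finset.prod_range_succ]
    norm_cast


lemma hasseDeriv_linear_mul (a : ℚ) (P : ℚ[X]) (j : ℕ) :
    Polynomial.hasseDeriv (j+1) ((X - C a) * P) =
      (X - C a) * Polynomial.hasseDeriv (j+1) P + Polynomial.hasseDeriv j P := by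
  rw [Polynomial.hasseDeriv_mul,
    Nat.sum_antidiagonal_eq_sum_range_succ (fun x y => hasseDeriv x (X - C a) * hasseDeriv y P)]
  rw [Finset.sum_range_succ', Finset.sum_range_succ']
  have h2 : ∀ m, hasseDeriv (m+2) (X - C a) = 0 := fun m => by
    rw [map_sub, Polynomial.hasseDeriv_X _ (by omega), Polynomial.hasseDeriv_C _ _ (by omega),
      sub_zero]
  simp [h2, Polynomial.hasseDeriv_one, Polynomial.hasseDeriv_zero]
  ring

lemma hasseDeriv_prod_linear (s : Finset ℕ) (c : ℕ → ℚ) (j : ℕ) :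
    Polynomial.hasseDeriv j (∏ i ∈ s, (X - C (c i))) =
      ∑ t ∈ s.powersetCard j, ∏ i ∈ s \ t, (X - C (c i)) := by
  induction s using Finset.induction_on generalizing j with
  | empty =>
    cases j with
    | zero => simp
    | succ j =>
      rw [Finset.prod_empty, Polynomial.hasseDeriv_apply_one _ (Nat.succ_pos j)]
      simp
  | @insert a s ha ih =>
    cases j with
    | zero => simp
    | succ j =>
      have hinj : Set.InjOn (insert a) ((s.powersetCard j : Finset (Finset ℕ)) : Set (Finset ℕ)) := by
        intro t1 h1 t2 h2 hins
        simp only [Finset.mem_coe, Finset.mem_powersetCard] at h1 h2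
        have e1 : t1 = (insert a t1).erase a := (Finset.erase_insert (fun h => ha (h1.1 h))).symm
        rw [e1, hins, Finset.erase_insert (fun h => ha (h2.1 h))]
      have hdisj : Disjoint (s.powersetCard (j+1)) ((s.powersetCard j).image (insert a)) := by
        rw [Finset.disjoint_left]
        intro t ht1 ht2
        rw [Finset.mem_powersetCard] at ht1
        rcases Finset.mem_image.mp ht2 with ⟨t', _, rfl⟩
        exact ha (ht1.1 (Finset.mem_insert_self a t'))
      rw [Finset.prod_insert ha, hasseDeriv_linear_mul, ih, ih,
        Finset.powersetCard_succ_insert ha, Finset.sum_union hdisj, Finset.sum_image hinj]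
      congr 1
      · rw [Finset.mul_sum]
        refine Finset.sum_congr rfl fun t ht => ?_
        rw [Finset.mem_powersetCard] at ht
        rw [Finset.insert_sdiff_of_notMem _ (fun h => ha (ht.1 h)),
          Finset.prod_insert (fun h => ha (Finset.mem_sdiff.mp h).1)]
      · refine Finset.sum_congr rfl fun t ht => ?_
        rw [Finset.mem_powersetCard] at ht
        congr 1
        have hat : a ∉ t := fun h => ha (ht.1 h)
        ext x
        by_cases hxa : x = a
        · subst hxa
          simp [ha, hat]
        · simp only [Finset.mem_sdiff, Finset.mem_insert, hxa, false_or]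

lemma count_range (a : ℤ) (b q n : ℕ) (hq : 1 ≤ q) (hco : Nat.Coprime b q) :
    n / q ≤ ((Finset.range n).filter (fun i : ℕ => (q:ℤ) ∣ a - (i:ℤ) * b)).card := by
  classical
  obtain ⟨u, v, huv⟩ := hco.isCoprime
  set c : ℤ := (a * u) % (q:ℤ) with hc
  have hq0 : (0:ℤ) < q := by exact_mod_cast hq
  have hc0 : 0 ≤ c := Int.emod_nonneg _ (by positivity)
  have hcq : c < q := Int.emod_lt_of_pos _ hq0
  have hcdef : c = a * u - q * ((a * u) / q) := by rw [hc, Int.emod_def]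
  have h1 : (1:ℤ) - u * b = v * q := by linarith
  have hdvd : (q:ℤ) ∣ a - c * b := by
    refine ⟨a * v + ((a * u) / q) * b, ?_⟩
    rw [hcdef]
    linear_combination a * h1
  rcases Nat.eq_zero_or_pos (n / q) with h | hpos
  · simp [h]
  calc n / q = (Finset.range (n / q)).card := (Finset.card_range _).symm
    _ ≤ _ := by
      apply Finset.card_le_card_of_injOn (fun t => c.toNat + t * q)
      · intro t ht
        rw [Finset.mem_coe, Finset.mem_range] at ht
        rw [Finset.mem_coe, Finset.mem_filter, Finset.mem_range]
        constructor
        · calc c.toNat + t * q < q + t * q := by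
                have : c.toNat < q := by omega
                omega
            _ = (t + 1) * q := by ring
            _ ≤ (n / q) * q := Nat.mul_le_mul_right _ (by omega)
            _ ≤ n := Nat.div_mul_le_self n q
        · have : ((c.toNat + t * q : ℕ) : ℤ) = c + t * q := by
            push_cast [Int.toNat_of_nonneg hc0]; ring
          rw [this]
          have : a - (c + t * q) * b = (a - c * b) - q * (t * b) := by ring
          rw [this]
          exact dvd_sub hdvd ⟨t * b, rfl⟩
      · intro t1 _ t2 _ h
        simp only at h
        have := Nat.add_left_cancel h
        exact Nat.eq_of_mul_eq_mul_right hq this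

lemma filter_sub (n j : ℕ) (S : Finset ℕ) (hS : S ⊆ Finset.range n) (hcard : S.card = n - j)
    (hjn : j ≤ n) (P : ℕ → Prop) [DecidablePred P] :
    ((Finset.range n).filter P).card ≤ (S.filter P).card + j := by
  have hsub : (Finset.range n).filter P ⊆ S.filter P ∪ (Finset.range n \ S) := by
    intro x hx
    rw [Finset.mem_filter] at hx
    by_cases hxS : x ∈ S
    · exact Finset.mem_union_left _ (Finset.mem_filter.mpr ⟨hxS, hx.2⟩)
    · exact Finset.mem_union_right _ (Finset.mem_sdiff.mpr ⟨hx.1, hxS⟩)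
  calc ((Finset.range n).filter P).card ≤ _ := Finset.card_le_card hsub
    _ ≤ (S.filter P).card + (Finset.range n \ S).card := Finset.card_union_le _ _
    _ = (S.filter P).card + j := by
        rw [Finset.card_sdiff_of_subset hS, Finset.card_range, hcard]
        omega

lemma val_prod (p : ℕ) (hp : p.Prime) (a : ℤ) (b : ℕ) (hpb : ¬ p ∣ b)
    (n j : ℕ) (hjn : j ≤ n) (S : Finset ℕ) (hS : S ⊆ Finset.range n)
    (hcard : S.card = n - j) (hA : ∀ i ∈ S, a - (i:ℤ) * b ≠ 0) :
    (n.factorial).factorization p ≤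
      (∏ i ∈ S, (a - (i:ℤ) * b)).natAbs.factorization p + j * Nat.log p n := by
  classical
  haveI : Fact p.Prime := ⟨hp⟩
  set T := Nat.log p n with hT
  rw [Nat.factorization_def _ hp, padicValNat_factorial (lt_add_one T)]
  have hco : ∀ m : ℕ, Nat.Coprime b (p ^ m) := fun m =>
    Nat.Coprime.pow_right m (hp.coprime_iff_not_dvd.mpr hpb).symm
  have step1 : ∀ m ∈ Finset.Ico 1 (T+1),
      n / p ^ m ≤ (S.filter (fun i : ℕ => ((p ^ m : ℕ):ℤ) ∣ a - (i:ℤ) * b)).card + j := by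
    intro m _
    calc n / p ^ m ≤ ((Finset.range n).filter
          (fun i : ℕ => ((p ^ m : ℕ):ℤ) ∣ a - (i:ℤ) * b)).card :=
        count_range a b (p ^ m) n (Nat.one_le_pow _ _ hp.pos) (hco m)
      _ ≤ _ := filter_sub n j S hS hcard hjn _
  have step2 : ∑ m ∈ Finset.Ico 1 (T+1),
      (S.filter (fun i : ℕ => ((p ^ m : ℕ):ℤ) ∣ a - (i:ℤ) * b)).card
      = ∑ i ∈ S, ((Finset.Ico 1 (T+1)).filter
          (fun m : ℕ => ((p ^ m : ℕ):ℤ) ∣ a - (i:ℤ) * b)).card := by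
    simp_rw [Finset.card_filter]
    exact Finset.sum_comm
  have step3 : ∀ i ∈ S, ((Finset.Ico 1 (T+1)).filter
      (fun m : ℕ => ((p ^ m : ℕ):ℤ) ∣ a - (i:ℤ) * b)).card
      ≤ ((a - (i:ℤ) * b).natAbs).factorization p := by
    intro i hi
    have hne : (a - (i:ℤ) * b).natAbs ≠ 0 := fun h => hA i hi (Int.natAbs_eq_zero.mp h)
    have hsub : (Finset.Ico 1 (T+1)).filter
        (fun m : ℕ => ((p ^ m : ℕ):ℤ) ∣ a - (i:ℤ) * b)
        ⊆ Finset.Icc 1 (((a - (i:ℤ) * b).natAbs).factorization p) := by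
      intro m hm
      rw [Finset.mem_filter, Finset.mem_Ico] at hm
      rw [Finset.mem_Icc]
      refine ⟨hm.1.1, ?_⟩
      have : p ^ m ∣ (a - (i:ℤ) * b).natAbs := Int.natCast_dvd.mp (by exact_mod_cast hm.2)
      exact (Nat.Prime.pow_dvd_iff_le_factorization hp hne).mp this
    calc _ ≤ (Finset.Icc 1 (((a - (i:ℤ) * b).natAbs).factorization p)).card :=
        Finset.card_le_card hsub
      _ = _ := by rw [Nat.card_Icc]; omega
  have step4 : (∏ i ∈ S, (a - (i:ℤ) * b)).natAbs.factorization p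
      = ∑ i ∈ S, ((a - (i:ℤ) * b).natAbs).factorization p := by
    have h1 : (∏ i ∈ S, (a - (i:ℤ) * b)).natAbs = ∏ i ∈ S, (a - (i:ℤ) * b).natAbs :=
      map_prod Int.natAbsHom _ S
    rw [h1, Nat.factorization_prod (fun i hi => fun h => hA i hi (Int.natAbs_eq_zero.mp h))]
    rw [Finset.sum_apply']
  calc ∑ m ∈ Finset.Ico 1 (T+1), n / p ^ m
      ≤ ∑ m ∈ Finset.Ico 1 (T+1),
        ((S.filter (fun i : ℕ => ((p ^ m : ℕ):ℤ) ∣ a - (i:ℤ) * b)).card + j) :=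
        Finset.sum_le_sum step1
    _ = (∑ m ∈ Finset.Ico 1 (T+1),
        (S.filter (fun i : ℕ => ((p ^ m : ℕ):ℤ) ∣ a - (i:ℤ) * b)).card) + T * j := by
        rw [Finset.sum_add_distrib, Finset.sum_const, Nat.card_Ico, smul_eq_mul,
          Nat.add_sub_cancel]
    _ ≤ (∑ i ∈ S, ((a - (i:ℤ) * b).natAbs).factorization p) + T * j := by
        rw [step2]
        exact Nat.add_le_add_right (Finset.sum_le_sum step3) _
    _ ≤ _ := by rw [step4, Nat.mul_comm j T]

lemma key_dvd (a : ℤ) (b : ℕ) (hb : 0 < b)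
    (k n j r : ℕ) (hn : n ≤ k) (hjn : j ≤ n) (hjr : j ≤ r - 1)
    (S : Finset ℕ) (hS : S ⊆ Finset.range n) (hcard : S.card = n - j) :
    ((n.factorial : ℤ) * (b:ℤ) ^ (n - j)) ∣
      (b:ℤ)^k * (((Finset.Icc 1 k).lcm id : ℕ):ℤ)^(r-1) *
      (∏ p ∈ b.primeFactors, (p:ℤ)^(tau p k)) * ∏ i ∈ S, (a - (i:ℤ) * b) := by
  classical
  set d : ℕ := (Finset.Icc 1 k).lcm id with hd
  have hd0 : d ≠ 0 := by
    rw [hd, Ne, Finset.lcm_eq_zero_iff]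
    rintro ⟨x, hx, hx0⟩
    rw [Finset.mem_Icc] at hx
    simp only [id_eq] at hx0
    omega
  set DbN : ℕ := ∏ p ∈ b.primeFactors, p ^ (tau p k) with hDbN
  have hDb0 : DbN ≠ 0 := Finset.prod_ne_zero_iff.mpr fun p hp =>
    pow_ne_zero _ (Nat.Prime.pos (Nat.prime_of_mem_primeFactors hp)).ne'
  have hDbcast : (∏ p ∈ b.primeFactors, (p:ℤ)^(tau p k)) = ((DbN : ℕ) : ℤ) := by
    push_cast [hDbN]; rfl
  set A : ℤ := ∏ i ∈ S, (a - (i:ℤ) * b) with hA'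
  -- main divisibility
  have hC : (n.factorial : ℤ) ∣ (b:ℤ)^(k-(n-j)) * (d:ℤ)^(r-1) * ((DbN:ℕ):ℤ) * A := by
    by_cases hA : ∀ i ∈ S, a - (i:ℤ) * b ≠ 0
    case neg =>
      push_neg at hA
      obtain ⟨i, hi, hi0⟩ := hA
      rw [hA', Finset.prod_eq_zero hi hi0, mul_zero]
      exact dvd_zero _
    have hAN0 : A.natAbs ≠ 0 := fun h =>
      (Finset.prod_ne_zero_iff.mpr hA) (Int.natAbs_eq_zero.mp h)
    set AN : ℕ := A.natAbs with hAN
    have hcast : (b:ℤ)^(k-(n-j)) * (d:ℤ)^(r-1) * ((DbN:ℕ):ℤ) =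
        ((b^(k-(n-j)) * d^(r-1) * DbN : ℕ) : ℤ) := by push_cast; ring
    rw [hcast]
    set M : ℕ := b^(k-(n-j)) * d^(r-1) * DbN with hM
    have hM0 : M ≠ 0 := by positivity
    -- reduce to ℕ
    have habs : ((M:ℤ) * A).natAbs = M * AN := by
      rw [Int.natAbs_mul, Int.natAbs_natCast]
    rw [← Int.dvd_natAbs, habs, Int.natCast_dvd_natCast]
    apply (Nat.factorization_le_iff_dvd (Nat.factorial_ne_zero n)
      (mul_ne_zero hM0 hAN0)).mp
    rw [Finsupp.le_def]
    intro p
    by_cases hp : p.Prime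
    case neg => simp [Nat.factorization_eq_zero_of_not_prime _ hp]
    have hb1 : b^(k-(n-j)) ≠ 0 := by positivity
    have hd1 : d^(r-1) ≠ 0 := pow_ne_zero _ hd0
    rw [hM, Nat.factorization_mul (mul_ne_zero (mul_ne_zero hb1 hd1) hDb0) hAN0,
      Nat.factorization_mul (mul_ne_zero hb1 hd1) hDb0,
      Nat.factorization_mul hb1 hd1, Finsupp.add_apply, Finsupp.add_apply,
      Finsupp.add_apply]
    by_cases hpb : p ∣ b
    · -- use DbN
      have hpf : p ∈ b.primeFactors := Nat.mem_primeFactors.mpr ⟨hp, hpb, hb.ne'⟩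
      have h1 : p ^ (tau p k) ∣ DbN := Finset.dvd_prod_of_mem _ hpf
      have h2 : tau p k ≤ DbN.factorization p :=
        (Nat.Prime.pow_dvd_iff_le_factorization hp hDb0).mp h1
      have h3 : (n.factorial).factorization p ≤ tau p k := by
        have := (Nat.factorization_le_iff_dvd (Nat.factorial_ne_zero n)
          (Nat.factorial_ne_zero k)).mpr (Nat.factorial_dvd_factorial hn)
        exact this p
      omega
    · -- counting
      have h1 : n.factorial.factorization p ≤ AN.factorization p + j * Nat.log p n := by
        rw [hAN, hA']
        exact val_prod p hp a b hpb n j hjn S hS hcard hA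
      have h2 : j * Nat.log p n ≤ (r-1) * d.factorization p := by
        rcases Nat.eq_zero_or_pos (Nat.log p n) with h | hTpos
        · simp [h]
        have hn0 : n ≠ 0 := by
          intro h; rw [h] at hTpos; simp [Nat.log_zero_right] at hTpos
        have hpT : p ^ (Nat.log p n) ≤ n := Nat.pow_log_le_self p hn0
        have hmem : p ^ (Nat.log p n) ∈ Finset.Icc 1 k :=
          Finset.mem_Icc.mpr ⟨Nat.one_le_pow _ _ hp.pos, le_trans hpT hn⟩
        have hdvd : p ^ (Nat.log p n) ∣ d := by
          have := Finset.dvd_lcm (f := id) hmem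
          simpa using this
        have hT : Nat.log p n ≤ d.factorization p :=
          (Nat.Prime.pow_dvd_iff_le_factorization hp hd0).mp hdvd
        exact Nat.mul_le_mul hjr hT
      have h3 : (d^(r-1)).factorization p = (r-1) * d.factorization p := by
        rw [Nat.factorization_pow, Finsupp.smul_apply, smul_eq_mul]
      omega
  -- assemble
  obtain ⟨z, hz⟩ := hC
  refine ⟨z, ?_⟩
  have hk' : (b:ℤ)^k = (b:ℤ)^(n-j) * (b:ℤ)^(k-(n-j)) := by
    rw [← pow_add]
    congr 1
    omega
  rw [hk', hDbcast]
  linear_combination (b:ℤ)^(n-j) * hz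

/-- for `λ ∈ ℚ` with `b = den λ` and `r ≥ 1`, the integer
`b^k · d_k^{r-1} · ∏_{p ∣ b} p^{τ_p(k)}` (where `d_k = lcm(1,…,k)`) is a common
denominator of all numbers `Δ_n^{(j)}(λ)/j!` with `0 ≤ j ≤ r-1`, `0 ≤ n ≤ k`, where
`Δ_n(X) = ⟨X⟩_n/n!`. -/
theorem stmt_7 (lam : ℚ) (b : ℕ) (hb : b = lam.den) (r : ℕ) (hr : 1 ≤ r)
    (k : ℕ) (hk : 1 ≤ k) (j n : ℕ) (hj : j ≤ r - 1) (hn : n ≤ k) :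
    ∃ z : ℤ,
      ((b : ℚ) ^ k * (((Finset.Icc 1 k).lcm id : ℕ) : ℚ) ^ (r - 1) *
          ∏ p ∈ b.primeFactors, (p : ℚ) ^ tau p k) *
        Polynomial.eval lam
          ((fun Q : Polynomial ℚ => Polynomial.derivative Q)^[j]
            ((Nat.factorial n : ℚ)⁻¹ • descPochhammer ℚ n)) / (j.factorial : ℚ)
      = (z : ℚ) := by
  classical
  have hb0 : 0 < b := hb ▸ lam.pos
  set N : ℚ := (b:ℚ)^k * (((Finset.Icc 1 k).lcm id : ℕ):ℚ)^(r-1) *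
    ∏ p ∈ b.primeFactors, (p:ℚ)^(tau p k) with hN
  -- rewrite the iterated derivative via hasse derivative
  have hderiv : (fun Q : Polynomial ℚ => Polynomial.derivative Q)^[j]
      ((Nat.factorial n : ℚ)⁻¹ • descPochhammer ℚ n)
      = (j.factorial : ℚ) • ((Nat.factorial n : ℚ)⁻¹ •
          Polynomial.hasseDeriv j (descPochhammer ℚ n)) := by
    have h1 : (fun Q : Polynomial ℚ => Polynomial.derivative Q)^[j]
        = (⇑(Polynomial.derivative (R := ℚ)))^[j] := rfl
    rw [h1, ← Polynomial.factorial_smul_hasseDeriv]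
    rw [LinearMap.smul_apply, map_smul]
    rw [← Nat.cast_smul_eq_nsmul ℚ]
  rw [hderiv, Polynomial.eval_smul, Polynomial.eval_smul, smul_eq_mul, smul_eq_mul]
  -- evaluate the hasse derivative
  have hV : Polynomial.eval lam (Polynomial.hasseDeriv j (descPochhammer ℚ n))
      = ∑ t ∈ (Finset.range n).powersetCard j,
          ∏ i ∈ Finset.range n \ t, (lam - (i:ℚ)) := by
    rw [descPoch_prod, hasseDeriv_prod_linear (Finset.range n) (fun i => (i:ℚ)) j]
    rw [Polynomial.eval_finset_sum]
    exact Finset.sum_congr rfl fun t _ => by rw [Polynomial.eval_prod]; simp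
  rw [hV]
  -- per-term integrality
  have hterm : ∀ t ∈ (Finset.range n).powersetCard j, ∃ z : ℤ,
      N * (∏ i ∈ Finset.range n \ t, (lam - (i:ℚ))) / (n.factorial : ℚ) = (z:ℤ) := by
    intro t ht
    rw [Finset.mem_powersetCard] at ht
    obtain ⟨hts, htc⟩ := ht
    set S := Finset.range n \ t with hSdef
    have hS : S ⊆ Finset.range n := Finset.sdiff_subset
    have hjn : j ≤ n := by
      have := Finset.card_le_card hts
      rwa [htc, Finset.card_range] at this
    have hcard : S.card = n - j := by
      rw [hSdef, Finset.card_sdiff_of_subset hts, Finset.card_range, htc]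
    obtain ⟨z, hz⟩ := key_dvd lam.num b hb0 k n j r hn hjn hj S hS hcard
    refine ⟨z, ?_⟩
    have hbden : (b:ℚ) ≠ 0 := Nat.cast_ne_zero.mpr hb0.ne'
    have hnum : lam * (b:ℚ) = (lam.num:ℚ) := by
      rw [hb]
      rw [eq_comm, ← div_eq_iff (Nat.cast_ne_zero.mpr lam.den_nz : ((lam.den:ℚ) ≠ 0))]
      exact Rat.num_div_den lam
    have hfac : ∀ i : ℕ, lam - (i:ℚ) = ((lam.num - (i:ℤ) * b : ℤ):ℚ) / (b:ℚ) := by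
      intro i
      push_cast
      rw [eq_div_iff hbden]
      linear_combination hnum
    have hprod : (∏ i ∈ S, (lam - (i:ℚ)))
        = ((∏ i ∈ S, (lam.num - (i:ℤ) * b) : ℤ):ℚ) / (b:ℚ)^(n-j) := by
      rw [← hcard]
      rw [Finset.prod_congr rfl fun i _ => hfac i, Finset.prod_div_distrib,
        Finset.prod_const]
      push_cast
      rfl
    rw [hprod]
    have hzQ := congrArg (Int.cast : ℤ → ℚ) hz
    push_cast at hzQ
    have hfacne : (n.factorial : ℚ) ≠ 0 := Nat.cast_ne_zero.mpr (Nat.factorial_ne_zero n)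
    rw [hN]
    push_cast
    field_simp
    linear_combination hzQ
  -- sum of integers is an integer
  have hsum : ∃ z : ℤ, (∑ t ∈ (Finset.range n).powersetCard j,
      N * (∏ i ∈ Finset.range n \ t, (lam - (i:ℚ))) / (n.factorial : ℚ)) = (z:ℚ) := by
    refine Finset.sum_induction _ (fun q => ∃ z : ℤ, q = (z:ℚ)) ?_ ⟨0, by simp⟩ hterm
    rintro x y ⟨zx, rfl⟩ ⟨zy, rfl⟩
    exact ⟨zx + zy, by push_cast; ring⟩
  obtain ⟨z, hsum⟩ := hsum
  refine ⟨z, ?_⟩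
  rw [← hsum]
  simp only [Finset.mul_sum, Finset.sum_div]
  refine Finset.sum_congr rfl fun t _ => ?_
  have hjne : (j.factorial : ℚ) ≠ 0 := Nat.cast_ne_zero.mpr (Nat.factorial_ne_zero j)
  have hfacne : (n.factorial : ℚ) ≠ 0 := Nat.cast_ne_zero.mpr (Nat.factorial_ne_zero n)
  field_simp
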